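/- For every real number p ≥ 1, the generalized π value satisfies 2 ≤ π_p < 4, where π_p := 2 ∫_0^1 (1 - t^p)^(-(p-1)/p) dt. -/

import Mathlib

open Real intervalIntegral MeasureTheory Set

/-- For every `p ≥ 1`, the generalized π value
`π_p = 2 ∫_0^1 (1-t^p)^(-(p-1)/p) dt` satisfies `2 ≤ π_p < 4`. -/
theorem pi_p_bounds (p : ℝ) (hp : 1 ≤ p) :
    2 ≤ 2 * (∫ t in (0 : ℝ)..1, (1 - t ^ p) ^ (-(p - 1) / p)) ∧
    2 * (∫ t in (0 : ℝ)..1, (1 - t ^ p) ^ (-(p - 1) / p)) < 4 := by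
  rcases eq_or_lt_of_le hp with h1 | h1
  · -- case p = 1
    subst h1
    have h0 : -((1:ℝ) - 1) / 1 = 0 := by norm_num
    rw [h0]
    simp only [Real.rpow_zero]
    norm_num
  · -- case p > 1
    have hp0 : (0:ℝ) < p := lt_trans one_pos h1
    set a : ℝ := (p - 1) / p with ha_def
    have ha0 : 0 < a := div_pos (by linarith) hp0
    have ha1 : a < 1 := (div_lt_one hp0).2 (by linarith)
    have hexp : -(p - 1) / p = -a := by rw [ha_def]; ring
    have h1p : 1 / p - 1 = -a := by rw [ha_def]; field_simp; ring
    set f : ℝ → ℝ := fun t => (1 - t ^ p) ^ (-a) with hf_def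
    set g : ℝ → ℝ := fun t => -(1 - t ^ p) ^ (1 / p) with hg_def
    set g' : ℝ → ℝ := fun t => t ^ (p - 1) * (1 - t ^ p) ^ (1 / p - 1) with hg'_def
    have hcont_pow : Continuous fun t : ℝ => t ^ p :=
      continuous_iff_continuousAt.2 fun x => Real.continuousAt_rpow_const x p (Or.inr hp0.le)
    have hcont_inner : Continuous fun t : ℝ => 1 - t ^ p := continuous_const.sub hcont_pow
    have hcont_g : Continuous g := by
      refine Continuous.neg ?_
      exact (continuous_iff_continuousAt.2 fun x =>
        Real.continuousAt_rpow_const x (1 / p) (Or.inr (by positivity))).comp hcont_inner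
    -- basic facts for x ∈ (0,1)
    have hbase : ∀ x ∈ Ioo (0:ℝ) 1, 0 < 1 - x ^ p := by
      intro x hx
      have : x ^ p < 1 := Real.rpow_lt_one hx.1.le hx.2 hp0
      linarith
    have hbase1 : ∀ x ∈ Ioo (0:ℝ) 1, 1 - x ^ p < 1 := by
      intro x hx
      have : 0 < x ^ p := Real.rpow_pos_of_pos hx.1 p
      linarith
    have hderiv : ∀ x ∈ Ioo (0:ℝ) 1, HasDerivAt g (g' x) x := by
      intro x hx
      have hxne : x ≠ 0 := hx.1.ne'
      have d1 : HasDerivAt (fun t : ℝ => t ^ p) (p * x ^ (p - 1)) x :=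
        Real.hasDerivAt_rpow_const (Or.inl hxne)
      have d2 : HasDerivAt (fun t : ℝ => 1 - t ^ p) (-(p * x ^ (p - 1))) x := by
        simpa using (hasDerivAt_const x (1:ℝ)).fun_sub d1
      have d3 : HasDerivAt (fun u : ℝ => u ^ (1 / p))
          (1 / p * (1 - x ^ p) ^ (1 / p - 1)) (1 - x ^ p) :=
        Real.hasDerivAt_rpow_const (Or.inl (hbase x hx).ne')
      have d4 : HasDerivAt g (-(1 / p * (1 - x ^ p) ^ (1 / p - 1) * -(p * x ^ (p - 1)))) x :=
        by have d4' := (d3.comp x d2).neg; exact d4'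
      convert d4 using 1
      rw [hg'_def]
      field_simp
    have hg'nonneg : ∀ x ∈ Ioo (0:ℝ) 1, 0 ≤ g' x := by
      intro x hx
      exact mul_nonneg (Real.rpow_nonneg hx.1.le _) (Real.rpow_nonneg (hbase x hx).le _)
    have hg'int : IntervalIntegrable g' volume 0 1 := by
      rw [intervalIntegrable_iff_integrableOn_Ioc_of_le zero_le_one]
      exact integrableOn_deriv_of_nonneg hcont_g.continuousOn hderiv hg'nonneg
    have hI1 : (∫ t in (0:ℝ)..1, g' t) = 1 := by
      rw [integral_eq_sub_of_hasDerivAt_of_le zero_le_one hcont_g.continuousOn hderiv hg'int]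
      rw [hg_def]
      simp only [Real.one_rpow, sub_self, Real.zero_rpow (by positivity : (1:ℝ)/p ≠ 0),
        Real.zero_rpow hp0.ne', sub_zero, Real.one_rpow]
      norm_num
    -- measurability of f
    have hfmeas : Measurable f := by
      rw [hf_def]
      measurability
    -- key pointwise inequality: f x < g' x + 1 on (0,1)
    have hkey : ∀ x ∈ Ioo (0:ℝ) 1, f x < g' x + 1 := by
      intro x hx
      have hb := hbase x hx
      have hb1 := hbase1 x hx
      have hfpos : 0 < f x := Real.rpow_pos_of_pos hb _
      have hg'eq : g' x = x ^ (p - 1) * f x := by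
        rw [hg'_def, hf_def, h1p]
      have hstep1 : x ^ p ≤ x ^ (p - 1) :=
        Real.rpow_le_rpow_of_exponent_ge hx.1 hx.2.le (by linarith)
      have hstep2 : 1 - x ^ p < (1 - x ^ p) ^ a := by
        calc 1 - x ^ p = (1 - x ^ p) ^ (1:ℝ) := (Real.rpow_one _).symm
        _ < (1 - x ^ p) ^ a := Real.rpow_lt_rpow_of_exponent_gt hb hb1 ha1
      have hlt : 1 - x ^ (p - 1) < (1 - x ^ p) ^ a := by linarith
      have hca : 0 < (1 - x ^ p) ^ a := Real.rpow_pos_of_pos hb _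
      have hfinv : f x = ((1 - x ^ p) ^ a)⁻¹ := by
        rw [hf_def]
        exact Real.rpow_neg hb.le a ▸ rfl
      have h2 : (1 - x ^ (p - 1)) * f x < 1 := by
        rw [hfinv, ← div_eq_mul_inv, div_lt_one hca]
        exact hlt
      nlinarith [hg'eq]
    have hfge1 : ∀ x ∈ Ico (0:ℝ) 1, 1 ≤ f x := by
      intro x hx
      have hxp : x ^ p < 1 := Real.rpow_lt_one hx.1 hx.2 hp0
      have hb : 0 < 1 - x ^ p := by linarith
      have hble : 1 - x ^ p ≤ 1 := by
        have : 0 ≤ x ^ p := Real.rpow_nonneg hx.1 p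
        linarith
      calc (1:ℝ) = (1 - x ^ p) ^ (0:ℝ) := (Real.rpow_zero _).symm
      _ ≤ (1 - x ^ p) ^ (-a) := Real.rpow_le_rpow_of_exponent_ge hb hble (by linarith)
    -- integrability of f
    have hfint : IntervalIntegrable f volume 0 1 := by
      rw [intervalIntegrable_iff_integrableOn_Ioc_of_le zero_le_one,
        integrableOn_Ioc_iff_integrableOn_Ioo]
      have hbig : IntegrableOn (fun x => g' x + 1) (Ioo (0:ℝ) 1) volume :=
        (hg'int.1.mono_set Ioo_subset_Ioc_self).add
          (integrableOn_const (C := (1:ℝ)) measure_Ioo_lt_top.ne)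
      refine Integrable.mono' hbig hfmeas.aestronglyMeasurable ?_
      · refine (ae_restrict_iff' measurableSet_Ioo).2 (Filter.Eventually.of_forall ?_)
        intro x hx
        have h0 : 0 ≤ f x := Real.rpow_nonneg (hbase x hx).le _
        rw [Real.norm_of_nonneg h0]
        exact (hkey x hx).le
    -- the integral in the statement equals ∫ f
    have hInteq : (∫ t in (0:ℝ)..1, (1 - t ^ p) ^ (-(p - 1) / p)) = ∫ t in (0:ℝ)..1, f t := by
      simp only [hexp, hf_def]
    -- lower bound
    have hlow : 1 ≤ ∫ t in (0:ℝ)..1, f t := by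
      have hne : ∀ᵐ x ∂(volume.restrict (Icc (0:ℝ) 1)), x ≠ 1 := by
        refine ae_restrict_of_ae (ae_iff.2 ?_)
        simp only [ne_eq, not_not]
        simpa using (Real.volume_singleton : volume ({(1:ℝ)} : Set ℝ) = 0)
      have hmem := ae_restrict_mem (μ := volume) (measurableSet_Icc : MeasurableSet (Icc (0:ℝ) 1))
      have hle : (fun _ : ℝ => (1:ℝ)) ≤ᵐ[volume.restrict (Icc (0:ℝ) 1)] f := by
        filter_upwards [hne, hmem] with x hx1 hxI
        exact hfge1 x ⟨hxI.1, lt_of_le_of_ne hxI.2 hx1⟩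
      calc (1:ℝ) = ∫ _ in (0:ℝ)..1, (1:ℝ) := by simp
      _ ≤ ∫ t in (0:ℝ)..1, f t :=
        integral_mono_ae_restrict zero_le_one intervalIntegrable_const hfint hle
    -- upper bound
    have hup : (∫ t in (0:ℝ)..1, f t) < 2 := by
      have hpos : 0 < ∫ t in (0:ℝ)..1, (g' t + 1 - f t) := by
        refine intervalIntegral_pos_of_pos_on
          ((hg'int.add intervalIntegrable_const).sub hfint) ?_ zero_lt_one
        intro x hx
        have := hkey x hx
        linarith
      rw [intervalIntegral.integral_sub (hg'int.add intervalIntegrable_const) hfint,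
        intervalIntegral.integral_add hg'int intervalIntegrable_const] at hpos
      simp only [intervalIntegral.integral_const, smul_eq_mul, sub_zero, mul_one, hI1] at hpos
      linarith
    rw [hInteq]
    constructor <;> linarith
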